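/- Let v ∈ F⁴. Then v is nonsingular if and only if Δ(v) is a nonzero square of 𝔽_q, i.e., if and only if there exists s ∈ F with s^q = s, s ≠ 0 and Δ(v) = s². -/

import Mathlib

/-- `Q(α,β,γ,δ) = αδ - βγ`, the quadratic form of the hyperbolic quadric. -/
def Qf {F : Type*} [Field F] (v : Fin 4 → F) : F := v 0 * v 3 - v 1 * v 2

/-- `H(α,β,γ,δ) = α^{q+1} - β^{q+1} - γ^{q+1} + δ^{q+1}`, the Hermitian form. -/
def Hf (q : ℕ) {F : Type*} [Field F] (v : Fin 4 → F) : F :=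
  v 0 ^ (q + 1) - v 1 ^ (q + 1) - v 2 ^ (q + 1) + v 3 ^ (q + 1)

/-- `v = (α,β,γ,δ)` is nonsingular if `(αz + δ^q z^q)x + (γz + β^q z^q)x^q ≠ 0`
for all nonzero `x, z`. -/
def Nonsingular (q : ℕ) {F : Type*} [Field F] (v : Fin 4 → F) : Prop :=
  ∀ x z : F, x ≠ 0 → z ≠ 0 →
    (v 0 * z + v 3 ^ q * z ^ q) * x + (v 2 * z + v 1 ^ q * z ^ q) * x ^ q ≠ 0

/-- `Δ(v) = H(v)² - 4·Q(v)^{q+1}`. -/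
def Deltaf (q : ℕ) {F : Type*} [Field F] (v : Fin 4 → F) : F :=
  Hf q v ^ 2 - 4 * Qf v ^ (q + 1)

/-- A Σ-vector: a nonzero vector of the form `(α, β, β^q, α^q)`. -/
def IsSigmaVec (q : ℕ) {F : Type*} [Field F] (v : Fin 4 → F) : Prop :=
  v ≠ 0 ∧ ∃ α β : F, v = ![α, β, β ^ q, α ^ q]

/-- The sesquilinear form `h(u,v) = u₁v₁^q - u₂v₂^q - u₃v₃^q + u₄v₄^q`. -/
def hForm (q : ℕ) {F : Type*} [Field F] (u v : Fin 4 → F) : F :=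
  u 0 * v 0 ^ q - u 1 * v 1 ^ q - u 2 * v 2 ^ q + u 3 * v 3 ^ q

/-- The one-dimensional `F`-subspace (as a set) spanned by `v`. -/
def Fline {F : Type*} [Field F] (v : Fin 4 → F) : Set (Fin 4 → F) :=
  {x | ∃ a : F, x = a • v}

/-- The number of one-dimensional `𝔽_q`-subspaces `⟨(s,t)⟩` of `𝔽_q²` with
`Q(s·u + t·w) = 0`. -/
noncomputable def tangentCount (q : ℕ) {F : Type*} [Field F] (u w : Fin 4 → F) : ℕ :=
  Set.ncard {L : Set (F × F) | ∃ s t : F, s ^ q = s ∧ t ^ q = t ∧ (s, t) ≠ (0, 0) ∧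
    Qf (fun i => s * u i + t * w i) = 0 ∧
    L = {p : F × F | ∃ e : F, e ^ q = e ∧ p = (e * s, e * t)}}

/-- `Z₁`: the set of `ξ ∉ {0, 1, -1}` such that `1 - ξ⁻²` is a nonzero square of `𝔽_q`. -/
def Zone (q : ℕ) (F : Type*) [Field F] : Set F :=
  {ξ | ξ ≠ 0 ∧ ξ ≠ 1 ∧ ξ ≠ -1 ∧ ∃ s : F, s ^ q = s ∧ s ≠ 0 ∧ 1 - (ξ ^ 2)⁻¹ = s ^ 2}

/-- `Z₂`: the set of `ξ ≠ 0` such that `1 - ξ⁻²` is a nonzero nonsquare of `𝔽_q`. -/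
def Ztwo (q : ℕ) (F : Type*) [Field F] : Set F :=
  {ξ | ξ ≠ 0 ∧ (1 - (ξ ^ 2)⁻¹) ^ q = 1 - (ξ ^ 2)⁻¹ ∧ 1 - (ξ ^ 2)⁻¹ ≠ 0 ∧
    ¬∃ s : F, s ^ q = s ∧ 1 - (ξ ^ 2)⁻¹ = s ^ 2}

section Aux
variable {F : Type*} [Field F] {q : ℕ}

lemma aux_h90 (hfrob : ∀ x y : F, (x + y) ^ q = x ^ q + y ^ q)
    (hqq : ∀ x : F, (x ^ q) ^ q = x) (hex : ∃ a : F, a ^ q ≠ a)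
    {c : F} (hc : c ^ (q + 1) = 1) : ∃ z : F, z ≠ 0 ∧ z ^ q = c * z := by
  have hc0 : c ≠ 0 := by
    rintro rfl
    simp [zero_pow, Nat.succ_ne_zero] at hc
  have hcq : c ^ q = c⁻¹ := by
    have h : c ^ q * c = 1 := by rw [← pow_succ]; exact hc
    exact eq_inv_of_mul_eq_one_left h
  have hciq : (c⁻¹) ^ q = c := by
    rw [inv_pow, hcq, inv_inv]
  have key : ∀ a : F, (a + c⁻¹ * a ^ q) ^ q = c * (a + c⁻¹ * a ^ q) := by
    intro a
    rw [hfrob, mul_pow, hciq, hqq]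
    field_simp
    ring
  by_cases h1 : (1 : F) + c⁻¹ * 1 ^ q = 0
  · obtain ⟨a, ha⟩ := hex
    refine ⟨a + c⁻¹ * a ^ q, ?_, key a⟩
    have hcinv : c⁻¹ = -1 := by
      rw [one_pow, mul_one] at h1
      linear_combination h1
    rw [hcinv]
    intro h0
    exact ha (by linear_combination -h0)
  · exact ⟨1 + c⁻¹ * 1 ^ q, h1, key 1⟩

lemma aux_Nfix (hqq : ∀ x : F, (x ^ q) ^ q = x) (t : F) :
    (t ^ (q + 1)) ^ q = t ^ (q + 1) := by
  rw [pow_succ, mul_pow, hqq]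
  ring

lemma aux_Hfix (hodd : Odd q)
    (hfrob : ∀ x y : F, (x + y) ^ q = x ^ q + y ^ q)
    (hqq : ∀ x : F, (x ^ q) ^ q = x) (v : Fin 4 → F) :
    (Hf q v) ^ q = Hf q v := by
  have hsub : ∀ x y : F, (x - y) ^ q = x ^ q - y ^ q := by
    intro x y
    rw [sub_eq_add_neg, hfrob, hodd.neg_pow, sub_eq_add_neg]
  simp only [Hf]
  rw [hfrob, hsub, hsub, aux_Nfix hqq, aux_Nfix hqq, aux_Nfix hqq, aux_Nfix hqq]

lemma aux_singular (hodd : Odd q)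
    (hfrob : ∀ x y : F, (x + y) ^ q = x ^ q + y ^ q)
    (hqq : ∀ x : F, (x ^ q) ^ q = x) (hex : ∃ a : F, a ^ q ≠ a)
    (v : Fin 4 → F) {u : F} (hu : u ^ (q + 1) = 1)
    (hsing : Hf q v + Qf v * u + (Qf v) ^ q * u ^ q = 0) :
    ∃ x z : F, x ≠ 0 ∧ z ≠ 0 ∧
      (v 0 * z + v 3 ^ q * z ^ q) * x + (v 2 * z + v 1 ^ q * z ^ q) * x ^ q = 0 := by
  have hsub : ∀ x y : F, (x - y) ^ q = x ^ q - y ^ q := by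
    intro x y
    rw [sub_eq_add_neg, hfrob, hodd.neg_pow, sub_eq_add_neg]
  have hEven : Even (q + 1) := hodd.add_one
  have huu : u ^ q * u = 1 := by rw [← pow_succ]; exact hu
  have hc : (u ^ q) ^ (q + 1) = 1 := by
    rw [← pow_mul, mul_comm, pow_mul, hu, one_pow]
  obtain ⟨z, hz, hzq⟩ := aux_h90 hfrob hqq hex hc
  have hHf : Hf q v = v 0 ^ q * v 0 - v 1 ^ q * v 1 - v 2 ^ q * v 2 + v 3 ^ q * v 3 := by
    simp only [Hf, pow_succ]
  have hQq : (Qf v) ^ q = v 0 ^ q * v 3 ^ q - v 1 ^ q * v 2 ^ q := by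
    simp only [Qf]
    rw [hsub, mul_pow, mul_pow]
  have hsing2 : (v 0 ^ q * v 0 - v 1 ^ q * v 1 - v 2 ^ q * v 2 + v 3 ^ q * v 3)
      + (v 0 * v 3 - v 1 * v 2) * u
      + (v 0 ^ q * v 3 ^ q - v 1 ^ q * v 2 ^ q) * u ^ q = 0 := by
    rw [← hHf, ← hQq]
    simpa [Qf] using hsing
  have hAq : (v 0 * z + v 3 ^ q * z ^ q) ^ q = v 0 ^ q * z ^ q + v 3 * z := by
    rw [hfrob, mul_pow, mul_pow, hqq, hqq]
  have hBq : (v 2 * z + v 1 ^ q * z ^ q) ^ q = v 2 ^ q * z ^ q + v 1 * z := by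
    rw [hfrob, mul_pow, mul_pow, hqq, hqq]
  have hNAB : (v 0 * z + v 3 ^ q * z ^ q) ^ (q + 1)
      = (v 2 * z + v 1 ^ q * z ^ q) ^ (q + 1) := by
    rw [pow_succ, pow_succ, hAq, hBq, hzq]
    linear_combination (z ^ 2 * u ^ q) * hsing2 + (- z ^ 2 * (v 0 * v 3 - v 1 * v 2)) * huu
  set A := v 0 * z + v 3 ^ q * z ^ q with hA
  set B := v 2 * z + v 1 ^ q * z ^ q with hB
  by_cases hA0 : A = 0
  · have hB0 : B = 0 := by
      have : B ^ (q + 1) = 0 := by rw [← hNAB, hA0, zero_pow (Nat.succ_ne_zero q)]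
      exact pow_eq_zero_iff (Nat.succ_ne_zero q) |>.mp this
    exact ⟨1, z, one_ne_zero, hz, by rw [← hA, ← hB, hA0, hB0, one_pow]; ring⟩
  · have hB0 : B ≠ 0 := by
      intro h
      apply hA0
      have : A ^ (q + 1) = 0 := by rw [hNAB, h, zero_pow (Nat.succ_ne_zero q)]
      exact pow_eq_zero_iff (Nat.succ_ne_zero q) |>.mp this
    have hcx : (-(A * B⁻¹)) ^ (q + 1) = 1 := by
      rw [hEven.neg_pow, mul_pow, inv_pow, hNAB, mul_inv_cancel₀ (pow_ne_zero _ hB0)]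
    obtain ⟨x, hx, hxq⟩ := aux_h90 hfrob hqq hex hcx
    refine ⟨x, z, hx, hz, ?_⟩
    rw [← hA, ← hB, hxq]
    field_simp
    ring

lemma aux_sq_anti (hodd : Odd q)
    (hfrob : ∀ x y : F, (x + y) ^ q = x ^ q + y ^ q)
    (hqq : ∀ x : F, (x ^ q) ^ q = x)
    (v : Fin 4 → F) {x z : F} (hx : x ≠ 0) (hz : z ≠ 0)
    (heq : (v 0 * z + v 3 ^ q * z ^ q) * x + (v 2 * z + v 1 ^ q * z ^ q) * x ^ q = 0) :
    ∃ y : F, y ^ q = -y ∧ Deltaf q v = y ^ 2 := by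
  have hsub : ∀ x y : F, (x - y) ^ q = x ^ q - y ^ q := by
    intro x y
    rw [sub_eq_add_neg, hfrob, hodd.neg_pow, sub_eq_add_neg]
  have hEven : Even (q + 1) := hodd.add_one
  have h2fix : (2 : F) ^ q = 2 := by
    have := hfrob 1 1
    rw [one_pow] at this
    norm_num at this ⊢
    exact this
  set A := v 0 * z + v 3 ^ q * z ^ q with hA
  set B := v 2 * z + v 1 ^ q * z ^ q with hB
  have hzq0 : z ^ q ≠ 0 := pow_ne_zero _ hz
  have hxq1 : x ^ (q + 1) ≠ 0 := pow_ne_zero _ hx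
  have hNAB : A ^ (q + 1) = B ^ (q + 1) := by
    have h1 : A * x = -(B * x ^ q) := by linear_combination heq
    have h2 : (A * x) ^ (q + 1) = (B * x ^ q) ^ (q + 1) := by
      rw [h1, hEven.neg_pow]
    rw [mul_pow, mul_pow, ← pow_mul, mul_comm q (q + 1), pow_mul,
      aux_Nfix hqq] at h2
    exact mul_right_cancel₀ hxq1 h2
  have hAq : A ^ q = v 0 ^ q * z ^ q + v 3 * z := by
    rw [hA, hfrob, mul_pow, mul_pow, hqq, hqq]
  have hBq : B ^ q = v 2 ^ q * z ^ q + v 1 * z := by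
    rw [hB, hfrob, mul_pow, mul_pow, hqq, hqq]
  have hHf : Hf q v = v 0 ^ q * v 0 - v 1 ^ q * v 1 - v 2 ^ q * v 2 + v 3 ^ q * v 3 := by
    simp only [Hf, pow_succ]
  have hQq : (Qf v) ^ q = v 0 ^ q * v 3 ^ q - v 1 ^ q * v 2 ^ q := by
    simp only [Qf]
    rw [hsub, mul_pow, mul_pow]
  have key : Hf q v * (z * z ^ q) + Qf v * z ^ 2 + (Qf v) ^ q * (z ^ q) ^ 2 = 0 := by
    rw [hHf, hQq]
    simp only [Qf]
    have h3 : A ^ q * A = B ^ q * B := by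
      rw [← pow_succ, ← pow_succ]; exact hNAB
    rw [hAq, hBq, hA, hB] at h3
    linear_combination h3
  obtain ⟨w, hw⟩ : ∃ w : F, w = Qf v * z * (z ^ q)⁻¹ := ⟨_, rfl⟩
  have hwq : w ^ q = (Qf v) ^ q * z ^ q * z⁻¹ := by
    rw [hw, mul_pow, mul_pow, inv_pow, hqq]
  have h1 : w + w ^ q = -(Hf q v) := by
    rw [hwq, hw]
    field_simp
    linear_combination key
  have h2 : w * w ^ q = (Qf v) ^ (q + 1) := by
    rw [hwq, hw, pow_succ]
    field_simp
  refine ⟨2 * w + Hf q v, ?_, ?_⟩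
  · rw [hfrob, mul_pow, h2fix, aux_Hfix hodd hfrob hqq]
    linear_combination 2 * h1
  · rw [Deltaf]
    linear_combination (-4 * w) * h1 + 4 * h2
end Aux


/-- `v` is nonsingular iff `Δ(v)` is a nonzero square of `𝔽_q`. -/
theorem stmt5 (q : ℕ) (hq : ∃ p k : ℕ, p.Prime ∧ 0 < k ∧ q = p ^ k) (hodd : Odd q)
    (F : Type*) [Field F] [Fintype F] (hF : Fintype.card F = q ^ 2)
    (v : Fin 4 → F) :
    Nonsingular q v ↔ ∃ s : F, s ^ q = s ∧ s ≠ 0 ∧ Deltaf q v = s ^ 2 := by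
  obtain ⟨p, k, hp, hk, hqpk⟩ := hq
  have hq2 : 2 ≤ q := by
    rw [hqpk]
    calc 2 ≤ p := hp.two_le
      _ ≤ p ^ k := Nat.le_self_pow (by omega) p
  have hq3 : 3 ≤ q := by
    obtain ⟨m, hm⟩ := hodd
    omega
  haveI hrc : CharP F (ringChar F) := ringChar.charP F
  obtain ⟨n, hrp, hcard⟩ := FiniteField.card F (ringChar F)
  have hrq : ringChar F = p := by
    have hcard' : ringChar F ^ (n : ℕ) = p ^ (2 * k) := by
      rw [← hcard, hF, hqpk, ← pow_mul, mul_comm k 2]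
    have hdvd : ringChar F ∣ p ^ (2 * k) := by
      rw [← hcard']
      exact dvd_pow_self (ringChar F) n.pos.ne'
    exact (Nat.prime_dvd_prime_iff_eq hrp hp).mp (hrp.dvd_of_dvd_pow hdvd)
  haveI hcp : CharP F p := hrq ▸ hrc
  haveI : Fact p.Prime := ⟨hp⟩
  have hfrob : ∀ x y : F, (x + y) ^ q = x ^ q + y ^ q := by
    intro x y
    rw [hqpk]
    exact add_pow_char_pow ..
  have hqq : ∀ x : F, (x ^ q) ^ q = x := by
    intro x
    rw [← pow_mul, ← sq, ← hF]
    exact FiniteField.pow_card x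
  have hp2 : p ≠ 2 := by
    rintro rfl
    rw [Nat.odd_iff, hqpk] at hodd
    have hdk : 2 ∣ 2 ^ k := dvd_pow_self 2 hk.ne'
    omega
  have h2F : (2 : F) ≠ 0 := by
    intro h
    have h' : ((2 : ℕ) : F) = 0 := by exact_mod_cast h
    have := (CharP.cast_eq_zero_iff F p 2).mp h'
    exact hp2 ((Nat.prime_dvd_prime_iff_eq hp Nat.prime_two).mp this)
  have hchar2 : ringChar F ≠ 2 := by rw [hrq]; exact hp2
  have hex : ∃ a : F, a ^ q ≠ a := by
    classical
    by_contra h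
    push_neg at h
    obtain ⟨g, hg⟩ := IsCyclic.exists_generator (α := Fˣ)
    have hord : orderOf g = q ^ 2 - 1 := by
      rw [orderOf_eq_card_of_forall_mem_zpowers hg, Nat.card_eq_fintype_card, Fintype.card_units, hF]
    have hgq : g ^ q = g := Units.ext (by rw [Units.val_pow_eq_pow_val]; exact h g)
    have hg1 : g ^ (q - 1) = 1 := by
      have hsucc : q - 1 + 1 = q := by omega
      have h2' : g ^ (q - 1) * g = 1 * g := by
        rw [← pow_succ, hsucc, hgq, one_mul]
      exact mul_right_cancel h2'
    have hdvd := orderOf_dvd_of_pow_eq_one hg1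
    rw [hord] at hdvd
    have hle := Nat.le_of_dvd (by omega) hdvd
    rw [pow_two] at hle
    have hmul : 2 * q ≤ q * q := Nat.mul_le_mul_right q hq2
    omega
  have hsub : ∀ x y : F, (x - y) ^ q = x ^ q - y ^ q := by
    intro x y
    rw [sub_eq_add_neg, hfrob, hodd.neg_pow, sub_eq_add_neg]
  have h2fix : (2 : F) ^ q = 2 := by
    have := hfrob 1 1
    rw [one_pow] at this
    norm_num at this ⊢
    exact this
  have h4fix : (4 : F) ^ q = 4 := by
    have h4 : (4 : F) = 2 * 2 := by norm_num
    rw [h4, mul_pow, h2fix]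
  have hDfix : (Deltaf q v) ^ q = Deltaf q v := by
    rw [Deltaf, hsub, mul_pow, h4fix, aux_Nfix hqq]
    congr 1
    rw [← pow_mul, mul_comm 2 q, pow_mul, aux_Hfix hodd hfrob hqq]
  obtain ⟨m, hm⟩ := hodd
  have dich : ∀ D : F, D ^ q = D → D ≠ 0 →
      ∃ y : F, D = y ^ 2 ∧ (y ^ q = y ∨ y ^ q = -y) := by
    intro D hD hD0
    have hsq : IsSquare D := by
      rw [FiniteField.isSquare_iff hchar2 hD0]
      have hE : Fintype.card F / 2 = 2 * m * (m + 1) := by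
        rw [hF]
        have h1 : q ^ 2 = 2 * (2 * m * (m + 1)) + 1 := by rw [hm]; ring
        rw [h1]
        omega
      have hD2m : D ^ (2 * m) = 1 := by
        have h3 : D ^ (2 * m) * D = 1 * D := by
          rw [← pow_succ, ← hm, hD, one_mul]
        exact mul_right_cancel₀ hD0 h3
      rw [hE, pow_mul, hD2m, one_pow]
    obtain ⟨y, hy⟩ := hsq
    have hyD : D = y ^ 2 := by rw [hy, sq]
    have hfac : (y ^ q - y) * (y ^ q + y) = 0 := by
      have h4 : (y ^ q) ^ 2 = y ^ 2 := by
        rw [← pow_mul, mul_comm, pow_mul, ← hyD, hD, hyD]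
      linear_combination h4
    rcases mul_eq_zero.mp hfac with h | h
    · exact ⟨y, hyD, Or.inl (by linear_combination h)⟩
    · exact ⟨y, hyD, Or.inr (by linear_combination h)⟩
  have hoddq : Odd q := ⟨m, hm⟩
  constructor
  · intro hns
    by_contra hno
    have hgetu : ∃ u : F, u ^ (q + 1) = 1 ∧
        Hf q v + Qf v * u + (Qf v) ^ q * u ^ q = 0 := by
      by_cases hQ : Qf v = 0
      · have hH : Hf q v = 0 := by
          by_contra hH0
          exact hno ⟨Hf q v, aux_Hfix hoddq hfrob hqq v, hH0, by
            rw [Deltaf, hQ, zero_pow (Nat.succ_ne_zero q)]; ring⟩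
        exact ⟨1, one_pow _, by
          simp [hH, hQ, zero_pow (by omega : q ≠ 0)]⟩
      · have hgety : ∃ y : F, y ^ q = -y ∧ Deltaf q v = y ^ 2 := by
          by_cases hD0 : Deltaf q v = 0
          · exact ⟨0, by rw [zero_pow (by omega : q ≠ 0), neg_zero], by rw [hD0]; ring⟩
          · obtain ⟨y, hyD, hy⟩ := dich _ hDfix hD0
            rcases hy with h | h
            · exact absurd ⟨y, h, fun h0 => hD0 (by rw [hyD, h0]; ring), hyD⟩ hno
            · exact ⟨y, h, hyD⟩
        obtain ⟨y, hyq, hyD⟩ := hgety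
        rw [Deltaf] at hyD
        obtain ⟨w, hw⟩ : ∃ w : F, w = (y - Hf q v) / 2 := ⟨_, rfl⟩
        have hwq : w ^ q = (-y - Hf q v) / 2 := by
          rw [hw, div_pow, hsub, hyq, aux_Hfix hoddq hfrob hqq, h2fix]
        have h1 : w + w ^ q = -(Hf q v) := by
          rw [hwq, hw]
          field_simp
          ring
        have h2 : w * w ^ q = (Qf v) ^ (q + 1) := by
          rw [hwq, hw]
          field_simp
          linear_combination hyD
        have hw0 : w ≠ 0 := by
          intro h0
          apply hQ
          have hz0 : (Qf v) ^ (q + 1) = 0 := by rw [← h2, h0, zero_mul]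
          exact pow_eq_zero_iff (Nat.succ_ne_zero q) |>.mp hz0
        have hwq1 : w ^ (q + 1) = Qf v ^ (q + 1) := by
          calc w ^ (q + 1) = w * w ^ q := by ring
            _ = Qf v ^ (q + 1) := h2
        refine ⟨w * (Qf v)⁻¹, ?_, ?_⟩
        · rw [mul_pow, inv_pow, hwq1, mul_inv_cancel₀ (pow_ne_zero _ hQ)]
        · have hQq0 : (Qf v) ^ q ≠ 0 := pow_ne_zero _ hQ
          rw [mul_pow, inv_pow,
            show Qf v * (w * (Qf v)⁻¹) = w from by field_simp,
            show (Qf v) ^ q * (w ^ q * ((Qf v) ^ q)⁻¹) = w ^ q from by field_simp]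
          linear_combination h1
    obtain ⟨u, hu, hsing⟩ := hgetu
    obtain ⟨x, z, hx, hz, heq⟩ := aux_singular hoddq hfrob hqq hex v hu hsing
    exact hns x z hx hz heq
  · rintro ⟨s, hsf, hs0, hsD⟩ x z hx hz heq
    obtain ⟨y, hyq, hyD⟩ := aux_sq_anti hoddq hfrob hqq v hx hz heq
    have hfac : (y - s) * (y + s) = 0 := by linear_combination hsD - hyD
    rcases mul_eq_zero.mp hfac with h | h
    · have h2s : (2 : F) * s = 0 := by
        have hy : y = s := by linear_combination h
        rw [hy] at hyq
        linear_combination hyq - hsf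
      rcases mul_eq_zero.mp h2s with h' | h'
      · exact h2F h'
      · exact hs0 h'
    · have h2s : (2 : F) * s = 0 := by
        have hy : y = -s := by linear_combination h
        rw [hy, hoddq.neg_pow] at hyq
        linear_combination -hyq - hsf
      rcases mul_eq_zero.mp h2s with h' | h'
      · exact h2F h'
      · exact hs0 h'
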